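/- arXiv:1208.1172 — 3 statements merged into one kernel-verified Lean document; each statement's English description precedes it below -/
import Mathlib

section
/- Let J be a positive integer and let Ω and Δ be nonempty subsets of ℝ^J with Ω ⊆ Δ. Let Pr : Ω → ℝ be a nonnegative, uniformly continuous function, and let P : Δ → Ω be a nonexpansive operator that is boundedly convergent: for every x ∈ Ω the sequence (P^k x)_{k=0}^∞ converges to a point y(x) ∈ Ω, and there exists γ ≥ 0 such that Pr(y(x)) ≤ γ for every x ∈ Ω. Then P is strongly perturbation resilient, i.e.: (a) there exists ε ≥ 0 such that for every x ∈ Ω there is a nonnegative integer K with Pr(P^K x) ≤ ε; and (b) for every ε ≥ 0 with the property that for every x ∈ Ω there exists a nonnegative integer K with Pr(P^K x) ≤ ε, for every ε' > ε, and for every sequence (x^k)_{k=0}^∞ of points of Ω satisfying x^{k+1} = P(x^k + β_k v^k) for all k ≥ 0, where the β_k are nonnegative reals with Σ_{k=0}^∞ β_k < ∞, the sequence (v^k)_{k=0}^∞ in ℝ^J is bounded, and x^k + β_k v^k ∈ Δ for all k, there exists a nonnegative integer K with Pr(x^K) ≤ ε'. -/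
open Filter Topology

/-- Theorem 1 of the paper: sufficient conditions for strong perturbation resilience. -/
theorem stmt_0 (J : ℕ) (hJ : 0 < J)
    (Ω Δ : Set (EuclideanSpace ℝ (Fin J)))
    (hΩ : Ω.Nonempty) (hΔ : Δ.Nonempty) (hΩΔ : Ω ⊆ Δ)
    (Pr : EuclideanSpace ℝ (Fin J) → ℝ)
    (hPr_nonneg : ∀ x ∈ Ω, 0 ≤ Pr x)
    (hPr_uc : ∀ ε > (0 : ℝ), ∃ δ > (0 : ℝ), ∀ x ∈ Ω, ∀ y ∈ Ω,
      ‖x - y‖ ≤ δ → |Pr x - Pr y| ≤ ε)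
    (P : EuclideanSpace ℝ (Fin J) → EuclideanSpace ℝ (Fin J))
    (hP_map : ∀ x ∈ Δ, P x ∈ Ω)
    (hP_nonexp : ∀ x ∈ Δ, ∀ y ∈ Δ, ‖P x - P y‖ ≤ ‖x - y‖)
    (y : EuclideanSpace ℝ (Fin J) → EuclideanSpace ℝ (Fin J))
    (hy : ∀ x ∈ Ω, y x ∈ Ω ∧ Tendsto (fun k => P^[k] x) atTop (𝓝 (y x)))
    (γ : ℝ) (hγ : 0 ≤ γ) (hyγ : ∀ x ∈ Ω, Pr (y x) ≤ γ) :
    (∃ ε ≥ (0 : ℝ), ∀ x ∈ Ω, ∃ K : ℕ, Pr (P^[K] x) ≤ ε) ∧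
    (∀ ε ≥ (0 : ℝ), (∀ x ∈ Ω, ∃ K : ℕ, Pr (P^[K] x) ≤ ε) →
      ∀ ε' > ε, ∀ (x : ℕ → EuclideanSpace ℝ (Fin J)) (β : ℕ → ℝ)
        (v : ℕ → EuclideanSpace ℝ (Fin J)),
        (∀ k, x k ∈ Ω) → (∀ k, 0 ≤ β k) → Summable β →
        (∃ M : ℝ, ∀ k, ‖v k‖ ≤ M) →
        (∀ k, x k + β k • v k ∈ Δ) →
        (∀ k, x (k + 1) = P (x k + β k • v k)) →
        ∃ K : ℕ, Pr (x K) ≤ ε') := by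
  -- iterates stay in Ω
  have hiter : ∀ x ∈ Ω, ∀ k, P^[k] x ∈ Ω := by
    intro x hx k
    induction k with
    | zero => exact hx
    | succ n ih =>
      rw [Function.iterate_succ_apply']
      exact hP_map _ (hΩΔ ih)
  constructor
  · -- part (a): ε = γ + 1 works
    refine ⟨γ + 1, by linarith, ?_⟩
    intro x hx
    obtain ⟨δ, hδ, hδuc⟩ := hPr_uc 1 one_pos
    obtain ⟨hyx, hconv⟩ := hy x hx
    have := (Metric.tendsto_atTop.1 hconv) δ hδ
    obtain ⟨K, hK⟩ := this
    refine ⟨K, ?_⟩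
    have hd : ‖P^[K] x - y x‖ ≤ δ := by
      have := hK K le_rfl
      rw [dist_eq_norm] at this
      exact this.le
    have := hδuc _ (hiter x hx K) _ hyx hd
    have h1 : Pr (P^[K] x) - Pr (y x) ≤ 1 := (abs_le.1 this).2
    have h2 := hyγ x hx
    linarith
  · -- part (b)
    intro ε hε hεprop ε' hε' x β v hxΩ hβ0 hβsum ⟨M, hM⟩ hxvΔ hrec
    have hM0 : 0 ≤ M := le_trans (norm_nonneg _) (hM 0)
    set e := ε' - ε with he
    have he0 : 0 < e := by simp [he]; linarith
    obtain ⟨δ, hδ, hδuc⟩ := hPr_uc e he0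
    -- choose K₀ with tail sum ≤ δ/(M+1)
    have htail : Tendsto (fun i => ∑' k, β (k + i)) atTop (𝓝 0) :=
      tendsto_sum_nat_add β
    have hpos : 0 < δ / (M + 1) := div_pos hδ (by linarith)
    obtain ⟨K₀, hK₀⟩ := (Metric.tendsto_atTop.1 htail) (δ / (M + 1)) hpos
    have htail' : ∑' k, β (k + K₀) ≤ δ / (M + 1) := by
      have := hK₀ K₀ le_rfl
      rw [Real.dist_eq, sub_zero] at this
      calc ∑' k, β (k + K₀) ≤ |∑' k, β (k + K₀)| := le_abs_self _
        _ ≤ δ / (M + 1) := this.le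
    have hsumtail : Summable (fun k => β (k + K₀)) :=
      (summable_nat_add_iff K₀).2 hβsum
    -- induction: ‖x (K₀ + m) - P^[m] (x K₀)‖ ≤ M * ∑ j in range m, β (K₀ + j)
    have key : ∀ m, ‖x (K₀ + m) - P^[m] (x K₀)‖ ≤
        M * ∑ j ∈ Finset.range m, β (K₀ + j) := by
      intro m
      induction m with
      | zero => simp
      | succ n ih =>
        have hstep : x (K₀ + (n + 1)) = P (x (K₀ + n) + β (K₀ + n) • v (K₀ + n)) := by
          rw [Nat.add_succ]; exact hrec (K₀ + n)
        rw [hstep, Function.iterate_succ_apply']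
        have h1 : ‖P (x (K₀ + n) + β (K₀ + n) • v (K₀ + n)) - P (P^[n] (x K₀))‖ ≤
            ‖(x (K₀ + n) + β (K₀ + n) • v (K₀ + n)) - P^[n] (x K₀)‖ :=
          hP_nonexp _ (hxvΔ _) _ (hΩΔ (hiter _ (hxΩ K₀) n))
        have h2 : ‖(x (K₀ + n) + β (K₀ + n) • v (K₀ + n)) - P^[n] (x K₀)‖ ≤
            ‖x (K₀ + n) - P^[n] (x K₀)‖ + β (K₀ + n) * ‖v (K₀ + n)‖ := by
          have : (x (K₀ + n) + β (K₀ + n) • v (K₀ + n)) - P^[n] (x K₀) =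
              (x (K₀ + n) - P^[n] (x K₀)) + β (K₀ + n) • v (K₀ + n) := by abel
          rw [this]
          calc _ ≤ ‖x (K₀ + n) - P^[n] (x K₀)‖ + ‖β (K₀ + n) • v (K₀ + n)‖ :=
              norm_add_le _ _
            _ = ‖x (K₀ + n) - P^[n] (x K₀)‖ + |β (K₀ + n)| * ‖v (K₀ + n)‖ := by
              rw [norm_smul, Real.norm_eq_abs]
            _ = _ := by rw [abs_of_nonneg (hβ0 _)]
        have h3 : β (K₀ + n) * ‖v (K₀ + n)‖ ≤ β (K₀ + n) * M :=
          mul_le_mul_of_nonneg_left (hM _) (hβ0 _)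
        rw [Finset.sum_range_succ, mul_add]
        calc _ ≤ ‖x (K₀ + n) - P^[n] (x K₀)‖ + β (K₀ + n) * ‖v (K₀ + n)‖ :=
            h1.trans h2
          _ ≤ M * ∑ j ∈ Finset.range n, β (K₀ + j) + M * β (K₀ + n) := by
            rw [mul_comm M (β (K₀ + n))]; linarith
    -- finite sums bounded by tail tsum
    have hfin : ∀ m, (∑ j ∈ Finset.range m, β (K₀ + j)) ≤ δ / (M + 1) := by
      intro m
      have h1 : (∑ j ∈ Finset.range m, β (K₀ + j)) =
          ∑ j ∈ Finset.range m, (fun k => β (k + K₀)) j := by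
        apply Finset.sum_congr rfl
        intro j _; simp [Nat.add_comm]
      rw [h1]
      exact le_trans (Summable.sum_le_tsum _ (fun i _ => hβ0 _) hsumtail) htail'
    have hdist : ∀ m, ‖x (K₀ + m) - P^[m] (x K₀)‖ ≤ δ := by
      intro m
      calc ‖x (K₀ + m) - P^[m] (x K₀)‖ ≤ M * ∑ j ∈ Finset.range m, β (K₀ + j) :=
          key m
        _ ≤ M * (δ / (M + 1)) := mul_le_mul_of_nonneg_left (hfin m) hM0
        _ ≤ δ := by
          rw [mul_div_assoc']
          rw [div_le_iff₀ (by linarith : (0:ℝ) < M + 1)]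
          nlinarith
    obtain ⟨K, hK⟩ := hεprop (x K₀) (hxΩ K₀)
    refine ⟨K₀ + K, ?_⟩
    have huc := hδuc _ (hxΩ (K₀ + K)) _ (hiter _ (hxΩ K₀) K) (hdist K)
    have h1 : Pr (x (K₀ + K)) - Pr (P^[K] (x K₀)) ≤ e := (abs_le.1 huc).2
    linarith
end

section
/- Let J be a positive integer and let Ω and Δ be nonempty subsets of ℝ^J with Ω ⊆ Δ. Let Pr : Ω → ℝ be a uniformly continuous function and let P : Δ → Ω be a nonexpansive operator. Suppose ε ≥ 0 is such that for every x ∈ Ω there exists a nonnegative integer k with Pr(P^k x) ≤ ε. Then for every ε' > ε and every sequence (x^k)_{k=0}^∞ of points of Ω satisfying x^{k+1} = P(x^k + β_k v^k) for all k ≥ 0, where the β_k are nonnegative reals with Σ_{k=0}^∞ β_k < ∞, the sequence (v^k)_{k=0}^∞ in ℝ^J is bounded, and x^k + β_k v^k ∈ Δ for all k, there exists a nonnegative integer K with Pr(x^K) ≤ ε'. -/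
/-- Second part of the proof of Theorem 1 (inequality (16)): for a nonexpansive
algorithmic operator and uniformly continuous proximity function, if every
unperturbed iteration sequence reaches `ε`-compatibility, then every boundedly
perturbed sequence reaches `ε'`-compatibility for each `ε' > ε`. -/
theorem stmt_4 (J : ℕ) (hJ : 0 < J)
    (Ω Δ : Set (EuclideanSpace ℝ (Fin J)))
    (hΩ : Ω.Nonempty) (hΔ : Δ.Nonempty) (hΩΔ : Ω ⊆ Δ)
    (Pr : EuclideanSpace ℝ (Fin J) → ℝ)
    (hPr_uc : ∀ ε > (0 : ℝ), ∃ δ > (0 : ℝ), ∀ x ∈ Ω, ∀ y ∈ Ω,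
      ‖x - y‖ ≤ δ → |Pr x - Pr y| ≤ ε)
    (P : EuclideanSpace ℝ (Fin J) → EuclideanSpace ℝ (Fin J))
    (hP_map : ∀ x ∈ Δ, P x ∈ Ω)
    (hP_nonexp : ∀ x ∈ Δ, ∀ y ∈ Δ, ‖P x - P y‖ ≤ ‖x - y‖)
    (ε : ℝ) (hε : 0 ≤ ε)
    (hreach : ∀ x ∈ Ω, ∃ k : ℕ, Pr (P^[k] x) ≤ ε) :
    ∀ ε' > ε, ∀ (x : ℕ → EuclideanSpace ℝ (Fin J)) (β : ℕ → ℝ)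
      (v : ℕ → EuclideanSpace ℝ (Fin J)),
      (∀ k, x k ∈ Ω) → (∀ k, 0 ≤ β k) → Summable β →
      (∃ M : ℝ, ∀ k, ‖v k‖ ≤ M) →
      (∀ k, x k + β k • v k ∈ Δ) →
      (∀ k, x (k + 1) = P (x k + β k • v k)) →
      ∃ K : ℕ, Pr (x K) ≤ ε' := by

  intro ε' hε' x β v hxΩ hβ hβsum hMex hmemΔ hrec
  obtain ⟨M, hM⟩ := hMex
  set M' : ℝ := max M 1 with hM'def
  have hM'pos : (0:ℝ) < M' := lt_of_lt_of_le one_pos (le_max_right _ _)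
  have hvM' : ∀ k, ‖v k‖ ≤ M' := fun k => (hM k).trans (le_max_left _ _)
  obtain ⟨δ, hδpos, hδ⟩ := hPr_uc (ε' - ε) (by linarith)
  -- choose N with small tail
  have htail : Filter.Tendsto (fun i => ∑' k, β (k + i)) Filter.atTop (nhds 0) :=
    tendsto_sum_nat_add β
  have hev : ∀ᶠ i in Filter.atTop, ∑' k, β (k + i) < δ / M' :=
    htail.eventually (gt_mem_nhds (by positivity))
  obtain ⟨N, hN⟩ := hev.exists
  have hsumN : Summable (fun j => β (j + N)) := (summable_nat_add_iff N).2 hβsum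
  -- partial sums bounded by tail sum
  have hpart : ∀ k, ∑ j ∈ Finset.range k, β (j + N) ≤ δ / M' := by
    intro k
    have := Summable.sum_le_tsum (Finset.range k) (fun i _ => hβ (i + N)) hsumN
    exact this.trans hN.le
  -- main induction
  have key : ∀ k, P^[k] (x N) ∈ Ω ∧
      ‖x (N + k) - P^[k] (x N)‖ ≤ M' * ∑ j ∈ Finset.range k, β (j + N) := by
    intro k
    induction k with
    | zero => simpa using hxΩ N
    | succ k ih =>
      obtain ⟨hmem, hbound⟩ := ih
      have hmemΔ' : P^[k] (x N) ∈ Δ := hΩΔ hmem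
      constructor
      · rw [Function.iterate_succ_apply']
        exact hP_map _ hmemΔ'
      · have h1 : x (N + (k + 1)) = P (x (N + k) + β (N + k) • v (N + k)) := by
          have := hrec (N + k); rw [← this]; ring_nf
        rw [h1, Function.iterate_succ_apply']
        have h2 := hP_nonexp _ (hmemΔ (N + k)) _ hmemΔ'
        have h3 : ‖x (N + k) + β (N + k) • v (N + k) - P^[k] (x N)‖ ≤
            ‖x (N + k) - P^[k] (x N)‖ + β (N + k) * ‖v (N + k)‖ := by
          have : x (N + k) + β (N + k) • v (N + k) - P^[k] (x N)
              = (x (N + k) - P^[k] (x N)) + β (N + k) • v (N + k) := by abel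
          rw [this]
          refine (norm_add_le _ _).trans ?_
          rw [norm_smul, Real.norm_eq_abs, abs_of_nonneg (hβ (N + k))]
        have h4 : β (N + k) * ‖v (N + k)‖ ≤ β (N + k) * M' :=
          mul_le_mul_of_nonneg_left (hvM' _) (hβ _)
        have h5 : ∑ j ∈ Finset.range (k + 1), β (j + N)
            = (∑ j ∈ Finset.range k, β (j + N)) + β (k + N) :=
          Finset.sum_range_succ _ _
        have hcomm : β (k + N) = β (N + k) := by rw [Nat.add_comm]
        calc ‖P (x (N + k) + β (N + k) • v (N + k)) - P (P^[k] (x N))‖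
            ≤ ‖x (N + k) + β (N + k) • v (N + k) - P^[k] (x N)‖ := h2
          _ ≤ ‖x (N + k) - P^[k] (x N)‖ + β (N + k) * ‖v (N + k)‖ := h3
          _ ≤ M' * ∑ j ∈ Finset.range k, β (j + N) + β (N + k) * M' := by
              linarith
          _ = M' * ∑ j ∈ Finset.range (k + 1), β (j + N) := by
              rw [h5, hcomm]; ring
  obtain ⟨k, hk⟩ := hreach (x N) (hxΩ N)
  refine ⟨N + k, ?_⟩
  obtain ⟨hmem, hbound⟩ := key k
  have hdist : ‖x (N + k) - P^[k] (x N)‖ ≤ δ := by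
    have := mul_le_mul_of_nonneg_left (hpart k) hM'pos.le
    have heq : M' * (δ / M') = δ := by field_simp
    linarith [hbound]
  have := hδ (x (N + k)) (hxΩ _) (P^[k] (x N)) hmem hdist
  have habs := abs_le.1 this
  linarith [habs.2]
end

section
/- Let J be a positive integer, let φ : ℝ^J → ℝ be a convex function, and let x ∈ ℝ^J. Let g ∈ ℝ^J satisfy the property: for 1 ≤ j ≤ J, if the j-th component g_j of g is not zero, then the partial derivative ∂φ/∂x_j(x) of φ at x exists and its value is g_j. Define d ∈ ℝ^J to be the zero vector if ‖g‖ = 0 and to be −g/‖g‖ otherwise. Then ‖d‖ ≤ 1 and there is a δ > 0 such that for all λ ∈ [0, δ], φ(x + λd) ≤ φ(x); that is, d is a nonascending vector for φ at x. -/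
/-- If a real function has negative derivative at `0`, then it is `≤ h 0` on some
right interval `Ioc 0 δ`. -/
lemma aux_neg_deriv_le {h : ℝ → ℝ} {a : ℝ} (ha : a < 0) (hh : HasDerivAt h a 0) :
    ∃ δ > (0 : ℝ), ∀ t ∈ Set.Ioc (0 : ℝ) δ, h t ≤ h 0 := by
  have hs : Filter.Tendsto (slope h 0) (nhdsWithin 0 {(0:ℝ)}ᶜ) (nhds a) :=
    hasDerivAt_iff_tendsto_slope.mp hh
  have hs' : Filter.Tendsto (slope h 0) (nhdsWithin 0 (Set.Ioi 0)) (nhds a) :=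
    hs.mono_left (nhdsWithin_mono _ (fun t ht => ne_of_gt ht))
  have hev : ∀ᶠ t in nhdsWithin (0:ℝ) (Set.Ioi 0), slope h 0 t < 0 :=
    hs'.eventually (Filter.Tendsto.eventually_lt_const ha Filter.tendsto_id)
  rw [Filter.eventually_iff, mem_nhdsGT_iff_exists_Ioc_subset] at hev
  obtain ⟨δ, hδ, hsub⟩ := hev
  refine ⟨δ, hδ, fun t ht => ?_⟩
  have h1 := hsub ht
  have ht0 : (0:ℝ) < t := ht.1
  simp only [slope_def_field, Set.mem_setOf_eq, sub_zero] at h1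
  rcases div_neg_iff.mp h1 with ⟨h2, h3⟩ | ⟨h2, h3⟩ <;> linarith

/-- Theorem 2 of the paper: if `φ` is convex and every nonzero component `g_j` of `g`
equals the partial derivative `∂φ/∂x_j(x)`, then `d := −g/‖g‖` (or `0` if `‖g‖ = 0`)
is a nonascending vector for `φ` at `x`. -/
theorem stmt_5 (J : ℕ) (hJ : 0 < J)
    (φ : EuclideanSpace ℝ (Fin J) → ℝ) (hφ : ConvexOn ℝ Set.univ φ)
    (x g : EuclideanSpace ℝ (Fin J))
    (hg : ∀ j : Fin J, g j ≠ 0 →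
      HasDerivAt (fun t : ℝ => φ (x + t • EuclideanSpace.single j (1 : ℝ))) (g j) 0)
    (d : EuclideanSpace ℝ (Fin J))
    (hd : d = if ‖g‖ = 0 then (0 : EuclideanSpace ℝ (Fin J)) else (-‖g‖⁻¹) • g) :
    ‖d‖ ≤ 1 ∧ ∃ δ > (0 : ℝ), ∀ lam ∈ Set.Icc (0 : ℝ) δ, φ (x + lam • d) ≤ φ x := by
  by_cases hg0 : ‖g‖ = 0
  · rw [if_pos hg0] at hd
    subst hd
    refine ⟨by simp, 1, one_pos, fun lam _ => ?_⟩
    simp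
  · rw [if_neg hg0] at hd
    have hgpos : 0 < ‖g‖ := lt_of_le_of_ne (norm_nonneg g) (Ne.symm hg0)
    have hdnorm : ‖d‖ = 1 := by
      rw [hd, norm_smul]
      simp [abs_of_pos (inv_pos.mpr hgpos), inv_mul_cancel₀ hg0]
    refine ⟨le_of_eq hdnorm, ?_⟩
    have hJ0 : (J : ℝ) ≠ 0 := Nat.cast_ne_zero.mpr hJ.ne'
    have hdj : ∀ j, d j = -‖g‖⁻¹ * g j := by
      intro j; rw [hd]; rfl
    -- For each j choose δ_j
    have hδj : ∀ j : Fin J, ∃ δ > (0 : ℝ), ∀ lam ∈ Set.Icc (0:ℝ) δ,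
        φ (x + ((J : ℝ) * lam * d j) • EuclideanSpace.single j (1:ℝ)) ≤ φ x := by
      intro j
      by_cases hgj : g j = 0
      · refine ⟨1, one_pos, fun lam _ => ?_⟩
        have : d j = 0 := by rw [hdj j, hgj]; ring
        simp [this]
      · have hinner : HasDerivAt (fun lam : ℝ => (J : ℝ) * d j * lam) ((J:ℝ) * d j) 0 := by
          simpa using (hasDerivAt_id (0:ℝ)).const_mul ((J:ℝ) * d j)
        have hg' : HasDerivAt (fun t : ℝ => φ (x + t • EuclideanSpace.single j (1:ℝ)))
            (g j) ((J:ℝ) * d j * 0) := by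
          simpa using hg j hgj
        have hder := hg'.comp 0 hinner
        have hneg : g j * ((J:ℝ) * d j) < 0 := by
          rw [hdj j]
          have hJpos : (0:ℝ) < (J:ℝ) := by positivity
          have hsq : 0 < g j * g j := mul_self_pos.mpr hgj
          have heq : g j * ((J:ℝ) * (-‖g‖⁻¹ * g j)) = -((J:ℝ) * (g j * g j) * ‖g‖⁻¹) := by ring
          rw [heq]
          have : 0 < (J:ℝ) * (g j * g j) * ‖g‖⁻¹ := by positivity
          linarith
        obtain ⟨δ, hδpos, hδ⟩ := aux_neg_deriv_le hneg hder
        refine ⟨δ, hδpos, fun lam hlam => ?_⟩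
        rcases eq_or_lt_of_le hlam.1 with h0 | h0
        · simp [← h0]
        · have := hδ lam ⟨h0, hlam.2⟩
          simp only [Function.comp] at this
          calc φ (x + ((J:ℝ) * lam * d j) • EuclideanSpace.single j (1:ℝ))
              = φ (x + ((J:ℝ) * d j * lam) • EuclideanSpace.single j (1:ℝ)) := by ring_nf
            _ ≤ φ (x + ((J:ℝ) * d j * 0) • EuclideanSpace.single j (1:ℝ)) := this
            _ = φ x := by simp
    choose δf hδfpos hδf using hδj
    have hne : (Finset.univ : Finset (Fin J)).Nonempty := by
      simpa [Finset.univ_nonempty_iff] using Fin.pos_iff_nonempty.mp hJ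
    set δ := Finset.univ.inf' hne δf with hδdef
    have hδpos : 0 < δ := by
      rw [hδdef, Finset.lt_inf'_iff]
      exact fun j _ => hδfpos j
    refine ⟨δ, hδpos, fun lam hlam => ?_⟩
    set z : Fin J → EuclideanSpace ℝ (Fin J) :=
      fun j => x + ((J:ℝ) * lam * d j) • EuclideanSpace.single j (1:ℝ) with hz
    have hdecomp : x + lam • d = ∑ j : Fin J, ((J : ℝ)⁻¹) • z j := by
      ext i
      simp only [hz, PiLp.add_apply, PiLp.smul_apply, Finset.sum_apply, smul_eq_mul,
        EuclideanSpace.single_apply, mul_ite, mul_one, mul_zero, mul_add,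
        Finset.sum_add_distrib, Finset.sum_const, Finset.card_univ, Fintype.card_fin,
        nsmul_eq_mul, Finset.sum_ite_eq, Finset.mem_univ, if_true]
      rw [WithLp.ofLp_sum, Finset.sum_apply]
      simp only [PiLp.add_apply, PiLp.smul_apply, smul_eq_mul, EuclideanSpace.single_apply,
        mul_ite, mul_one, mul_zero, ite_mul, zero_mul, Finset.sum_add_distrib,
        Finset.sum_const, Finset.card_univ, Fintype.card_fin, nsmul_eq_mul,
        Finset.sum_ite_eq, Finset.mem_univ, if_true]
      have hterm : ∀ j : Fin J, (J:ℝ)⁻¹ * (x i + if i = j then (J:ℝ) * lam * d j else 0)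
          = (J:ℝ)⁻¹ * x i + (if i = j then lam * d j else 0) := by
        intro j
        split
        · field_simp
        · simp
      rw [Finset.sum_congr rfl (fun j _ => hterm j), Finset.sum_add_distrib,
        Finset.sum_ite_eq, Finset.sum_const, Finset.card_univ, Fintype.card_fin,
        nsmul_eq_mul]
      simp only [Finset.mem_univ, if_true]
      field_simp
    have hwsum : ∑ _j : Fin J, (J : ℝ)⁻¹ = 1 := by
      simp [Finset.sum_const, Finset.card_univ]
      field_simp
    calc φ (x + lam • d) = φ (∑ j : Fin J, ((J:ℝ)⁻¹) • z j) := by rw [hdecomp]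
      _ ≤ ∑ j : Fin J, (J:ℝ)⁻¹ • φ (z j) :=
          hφ.map_sum_le (fun _ _ => by positivity) hwsum (fun _ _ => Set.mem_univ _)
      _ ≤ ∑ _j : Fin J, (J:ℝ)⁻¹ * φ x := by
          refine Finset.sum_le_sum fun j _ => ?_
          have hle : lam ∈ Set.Icc (0:ℝ) (δf j) :=
            ⟨hlam.1, le_trans hlam.2 (Finset.inf'_le _ (Finset.mem_univ j))⟩
          exact mul_le_mul_of_nonneg_left (hδf j lam hle) (by positivity)
      _ = φ x := by
          rw [Finset.sum_const, Finset.card_univ, Fintype.card_fin, nsmul_eq_mul]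
          field_simp
end
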